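/- For the torus knot T(p,q) with coprime 1 < p < q, the symmetrized Alexander polynomial satisfies t^g · Δ(t) = 1 + (t-1)·∑_{r ∈ G} t^r, where S is the numerical semigroup generated by p and q, G its gap set, and g = (p-1)(q-1)/2; i.e., the polynomial (t^{pq}-1)(t-1)/((t^p-1)(t^q-1)) equals 1 + (t-1)·∑_{r ∈ G} t^r. -/
import Mathlib

open Polynomial Finset

/-- Coprime cancellation: if `q ∣ (a - a') * p` with `a, a' < q` and `gcd p q = 1`, then `a = a'`. -/
lemma torus_knot_mod_aux (p q a a' : ℕ) (hcop : Nat.Coprime p q) (ha : a < q) (ha' : a' < q)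
    (h : (q:ℤ) ∣ ((a:ℤ) - a') * p) : a = a' := by
  have hcop' : IsCoprime (q:ℤ) (p:ℤ) := by
    rw [Int.isCoprime_iff_gcd_eq_one]; simpa [Int.gcd] using hcop.symm
  have h2 : (q:ℤ) ∣ ((a:ℤ) - a') := hcop'.dvd_of_dvd_mul_right h
  have h3 : ((a:ℤ) - a') = 0 := by
    refine Int.eq_zero_of_abs_lt_dvd h2 ?_
    rw [abs_sub_lt_iff]
    constructor <;> omega
  omega

open scoped Classical in
theorem alexander_polynomial_torus_knot_gap_formula
    (p q : ℕ) (hp : 1 < p) (hpq : p < q) (hcop : Nat.Coprime p q)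
    (G : Finset ℕ)
    (hG : G = (Finset.range (p * q)).filter (fun n => ¬ ∃ a b : ℕ, n = a * p + b * q)) :
    ((X : ℤ[X]) ^ (p * q) - 1) * (X - 1) =
      (X ^ p - 1) * (X ^ q - 1) * (1 + (X - 1) * ∑ r ∈ G, X ^ r) := by
  subst hG
  have hq : 1 < q := hpq.trans' hp
  have hp0 : 0 < p := by omega
  have hq0 : 0 < q := by omega
  have hpqmul : p + q ≤ p * q := Nat.add_le_mul hp hq
  set A : ℤ[X] := ∑ m ∈ (Finset.range (p * q)).filter (fun n => ∃ a b : ℕ, n = a * p + b * q),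
      X ^ m with hA
  set B : ℤ[X] := ∑ m ∈ (Finset.range (p * q)).filter (fun n => ¬ ∃ a b : ℕ, n = a * p + b * q),
      X ^ m with hB
  set P : ℤ[X] := ∑ a ∈ Finset.range q, ((X : ℤ[X]) ^ p) ^ a with hP
  set Q : ℤ[X] := ∑ b ∈ Finset.range p, ((X : ℤ[X]) ^ q) ^ b with hQ
  -- geometric series facts
  have h1 : P * (X ^ p - 1) = X ^ (p * q) - 1 := by
    rw [hP, geom_sum_mul, ← pow_mul]
  have h2 : Q * (X ^ q - 1) = X ^ (p * q) - 1 := by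
    rw [hQ, geom_sum_mul, ← pow_mul, mul_comm q p]
  have h4 : (A + B) * (X - 1) = X ^ (p * q) - 1 := by
    rw [hA, hB, Finset.sum_filter_add_sum_filter_not, geom_sum_mul]
  -- the image set E
  set f : ℕ × ℕ → ℕ := fun ab => ab.1 * p + ab.2 * q with hf
  set E : Finset ℕ := (Finset.range q ×ˢ Finset.range p).image f with hE
  have hinj : ∀ x ∈ Finset.range q ×ˢ Finset.range p, ∀ y ∈ Finset.range q ×ˢ Finset.range p,
      f x = f y → x = y := by
    rintro ⟨a, b⟩ hx ⟨a', b'⟩ hy hfxy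
    simp only [Finset.mem_product, Finset.mem_range] at hx hy
    simp only [hf] at hfxy
    have hz : (a:ℤ) * p + b * q = a' * p + b' * q := by exact_mod_cast hfxy
    have haa : a = a' := by
      refine torus_knot_mod_aux p q a a' hcop hx.1 hy.1 ⟨(b':ℤ) - b, by linear_combination hz⟩
    subst haa
    have : b = b' := by
      have : b * q = b' * q := by omega
      exact Nat.eq_of_mul_eq_mul_right hq0 this
    simp [this]
  have hPQ : P * Q = ∑ n ∈ E, (X : ℤ[X]) ^ n := by
    rw [hE, Finset.sum_image hinj, hP, hQ, Finset.sum_mul_sum, ← Finset.sum_product']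
    refine Finset.sum_congr rfl fun ⟨a, b⟩ _ => ?_
    rw [hf]
    simp only [← pow_mul, ← pow_add, mul_comm p _, mul_comm q _]
  -- E below p*q is the semigroup part
  have hEa : E.filter (fun n => n < p * q)
      = (Finset.range (p * q)).filter (fun n => ∃ a b : ℕ, n = a * p + b * q) := by
    ext n
    simp only [hE, Finset.mem_filter, Finset.mem_image, Finset.mem_product, Finset.mem_range, hf]
    constructor
    · rintro ⟨⟨⟨a, b⟩, -, rfl⟩, hlt⟩
      exact ⟨hlt, a, b, rfl⟩
    · rintro ⟨hlt, a, b, rfl⟩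
      have ha : a < q := by
        by_contra hc
        have : q * p ≤ a * p := Nat.mul_le_mul_right p (by omega)
        have : p * q = q * p := mul_comm p q
        omega
      have hb : b < p := by
        by_contra hc
        have : p * q ≤ b * q := Nat.mul_le_mul_right q (by omega)
        omega
      exact ⟨⟨⟨a, b⟩, ⟨ha, hb⟩, rfl⟩, hlt⟩
  -- E at or above p*q is p*q plus the gap set
  have hEb : E.filter (fun n => ¬ n < p * q)
      = ((Finset.range (p * q)).filter (fun n => ¬ ∃ a b : ℕ, n = a * p + b * q)).image
          (fun m => p * q + m) := by
    ext n
    simp only [hE, Finset.mem_filter, Finset.mem_image, Finset.mem_product, Finset.mem_range,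
      hf, not_lt]
    constructor
    · rintro ⟨⟨⟨a, b⟩, ⟨ha, hb⟩, rfl⟩, hge⟩
      dsimp only at hge ⊢
      have h5 : (a + 1) * p ≤ q * p := Nat.mul_le_mul_right p (by omega)
      have h6 : (b + 1) * q ≤ p * q := Nat.mul_le_mul_right q (by omega)
      rw [add_mul, one_mul] at h5 h6
      have h9 : q * p = p * q := mul_comm q p
      refine ⟨a * p + b * q - p * q, ⟨?_, ?_⟩, by omega⟩
      · -- the difference is < p*q
        omega
      · -- the difference is not representable
        rintro ⟨a', b', hm⟩
        have hm' : a * p + b * q = p * q + (a' * p + b' * q) := by omega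
        have hmlt : a' * p + b' * q < p * q := by omega
        have ha' : a' < q := by
          by_contra hc
          have : q * p ≤ a' * p := Nat.mul_le_mul_right p (by omega)
          have : p * q = q * p := mul_comm p q
          omega
        have hb' : b' < p := by
          by_contra hc
          have : p * q ≤ b' * q := Nat.mul_le_mul_right q (by omega)
          omega
        have hz : (a:ℤ) * p + b * q = p * q + (a' * p + b' * q) := by exact_mod_cast hm'
        have haa : a = a' := by
          refine torus_knot_mod_aux p q a a' hcop ha ha' ⟨(p:ℤ) + b' - b, by linear_combination hz⟩
        subst haa
        have hbq : (b:ℤ) * q = (p + b') * q := by linear_combination hz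
        have : b = p + b' := by
          have := mul_right_cancel₀ (b := (q:ℤ)) (by exact_mod_cast hq0.ne') hbq
          exact_mod_cast this
        omega
    · rintro ⟨m, ⟨hmlt, hmns⟩, rfl⟩
      -- representability from the Frobenius number (Chicken McNugget)
      have F := frobeniusNumber_pair hcop hp hq
      have hmem : p * q + m ∈ AddSubmonoid.closure ({p, q} : Set ℕ) := by
        by_contra hcm
        have := F.2 hcm
        omega
      rw [AddSubmonoid.mem_closure_pair] at hmem
      obtain ⟨a, b, hab⟩ := hmem
      simp only [smul_eq_mul] at hab
      have hab' : p * q + m = a * p + b * q := hab.symm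
      have ha : a < q := by
        by_contra hc
        refine hmns ⟨a - q, b, ?_⟩
        have hle : q ≤ a := by omega
        have h1' : (a - q) * p + q * p = a * p := by rw [← add_mul, Nat.sub_add_cancel hle]
        have : q * p = p * q := mul_comm q p
        omega
      have hb : b < p := by
        by_contra hc
        refine hmns ⟨a, b - p, ?_⟩
        have hle : p ≤ b := by omega
        have h1' : (b - p) * q + p * q = b * q := by rw [← add_mul, Nat.sub_add_cancel hle]
        omega
      exact ⟨⟨⟨a, b⟩, ⟨ha, hb⟩, hab'.symm⟩, by omega⟩
  -- key decomposition
  have h3 : P * Q = A + X ^ (p * q) * B := by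
    rw [hPQ, ← Finset.sum_filter_add_sum_filter_not E (fun n => n < p * q), hEa, hEb,
      Finset.sum_image (fun x _ y _ h => by omega), hA, hB, Finset.mul_sum]
    simp [pow_add]
  -- now pure algebra, cancelling nonzero factors in the domain ℤ[X]
  have hXpq : ((X : ℤ[X]) ^ (p * q) - 1) ≠ 0 := by
    have := Polynomial.X_pow_sub_C_ne_zero (R := ℤ) (n := p * q) (Nat.mul_pos hp0 hq0) 1
    simpa using this
  have hXp : ((X : ℤ[X]) ^ p - 1) ≠ 0 := by
    have := Polynomial.X_pow_sub_C_ne_zero (R := ℤ) hp0 1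
    simpa using this
  have hXq : ((X : ℤ[X]) ^ q - 1) ≠ 0 := by
    have := Polynomial.X_pow_sub_C_ne_zero (R := ℤ) hq0 1
    simpa using this
  have key : P * Q * (X - 1) = (X ^ (p * q) - 1) * (1 + (X - 1) * B) := by
    linear_combination (X - 1 : ℤ[X]) * h3 + h4
  apply mul_left_cancel₀ hXpq
  calc (X ^ (p * q) - 1 : ℤ[X]) * ((X ^ (p * q) - 1) * (X - 1))
      = (P * (X ^ p - 1)) * (Q * (X ^ q - 1)) * (X - 1) := by rw [h1, h2]; ring
    _ = (X ^ p - 1) * (X ^ q - 1) * (P * Q * (X - 1)) := by ring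
    _ = (X ^ p - 1) * (X ^ q - 1) * ((X ^ (p * q) - 1) * (1 + (X - 1) * B)) := by rw [key]
    _ = (X ^ (p * q) - 1) * ((X ^ p - 1) * (X ^ q - 1) * (1 + (X - 1) * B)) := by ring
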